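/- Let Γ be a regular cone in ℝ² and let β be a point of the topological boundary of Γ. Then ∫_{Γ*} e^{−4π y·t} dt → ∞ as y → β with y ∈ Γ: for every M > 0 there is δ > 0 such that for all y ∈ Γ with |y − β| < δ, ∫_{Γ*} e^{−4π y·t} dt ≥ M. -/

import Mathlib

open MeasureTheory Metric

/-- The dual cone `Γ* = {t : x·t ≥ 0 for all x ∈ Γ}` of a set `Γ ⊆ ℝⁿ`. -/
def dualCone {n : ℕ} (Γ : Set (EuclideanSpace ℝ (Fin n))) : Set (EuclideanSpace ℝ (Fin n)) :=
  {t | ∀ x ∈ Γ, 0 ≤ ∑ j, x j * t j}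

lemma sum_mul_eq_inner {n : ℕ} (x t : EuclideanSpace ℝ (Fin n)) :
    ∑ j, x j * t j = (inner ℝ x t : ℝ) := by
  simp [PiLp.inner_apply, RCLike.inner_apply, mul_comm]

lemma mem_dualCone_iff {n : ℕ} (Γ : Set (EuclideanSpace ℝ (Fin n)))
    (t : EuclideanSpace ℝ (Fin n)) :
    t ∈ dualCone Γ ↔ ∀ x ∈ Γ, 0 ≤ (inner ℝ x t : ℝ) := by
  simp only [dualCone, Set.mem_setOf_eq, sum_mul_eq_inner]

lemma isClosed_dualCone {n : ℕ} (Γ : Set (EuclideanSpace ℝ (Fin n))) :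
    IsClosed (dualCone Γ) := by
  have : dualCone Γ = ⋂ x ∈ Γ, {t : EuclideanSpace ℝ (Fin n) | 0 ≤ (inner ℝ x t : ℝ)} := by
    ext t; simp [mem_dualCone_iff]
  rw [this]
  refine isClosed_biInter fun x _ => ?_
  exact isClosed_le continuous_const (continuous_const.inner continuous_id)

lemma smul_mem_dualCone {n : ℕ} {Γ : Set (EuclideanSpace ℝ (Fin n))} {a : ℝ}
    {t : EuclideanSpace ℝ (Fin n)} (ha : 0 ≤ a) (ht : t ∈ dualCone Γ) :
    a • t ∈ dualCone Γ := by
  rw [mem_dualCone_iff] at ht ⊢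
  intro x hx
  rw [real_inner_smul_right]
  exact mul_nonneg ha (ht x hx)

lemma add_mem_dualCone {n : ℕ} {Γ : Set (EuclideanSpace ℝ (Fin n))}
    {s t : EuclideanSpace ℝ (Fin n)} (hs : s ∈ dualCone Γ) (ht : t ∈ dualCone Γ) :
    s + t ∈ dualCone Γ := by
  rw [mem_dualCone_iff] at hs ht ⊢
  intro x hx
  rw [inner_add_right]
  exact add_nonneg (hs x hx) (ht x hx)

lemma cube_le_exp {x : ℝ} (hx : 0 ≤ x) : x ^ 3 ≤ 27 * Real.exp x := by
  have h1 : 1 + x / 3 ≤ Real.exp (x / 3) := by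
    simpa [add_comm] using Real.add_one_le_exp (x / 3)
  have h2 : (x / 3) ^ 3 ≤ (1 + x / 3) ^ 3 := by
    apply pow_le_pow_left₀ (by positivity) (by linarith)
  have h3 : (1 + x / 3) ^ 3 ≤ Real.exp (x / 3) ^ 3 := by
    apply pow_le_pow_left₀ (by positivity) h1
  have h4 : Real.exp (x / 3) ^ 3 = Real.exp x := by
    rw [← Real.exp_nat_mul]; congr 1; push_cast; ring
  nlinarith [h2, h3, h4]

lemma exp_neg_le_aux {c : ℝ} (hc : 0 < c) (s : ℝ) (hs : 0 ≤ s) :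
    Real.exp (-(c * s)) ≤ (27 * Real.exp c / c ^ 3) * (1 + s) ^ (-3 : ℝ) := by
  have hb : (0:ℝ) < 1 + s := by linarith
  rw [Real.rpow_neg hb.le, show (3:ℝ) = ((3:ℕ):ℝ) by norm_num, Real.rpow_natCast]
  have key : (c * (1 + s)) ^ 3 ≤ 27 * Real.exp (c * (1 + s)) :=
    cube_le_exp (by positivity)
  have hexp : Real.exp (c * (1 + s)) = Real.exp c * Real.exp (c * s) := by
    rw [← Real.exp_add]; ring_nf
  have h5 : c ^ 3 * (1 + s) ^ 3 ≤ 27 * Real.exp c * Real.exp (c * s) := by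
    rw [mul_pow] at key; rw [hexp] at key; linarith [key]
  have hrhs : 27 * Real.exp c / c ^ 3 * ((1 + s) ^ 3)⁻¹
      = (27 * Real.exp c) / (c ^ 3 * (1 + s) ^ 3) := by
    field_simp
  rw [Real.exp_neg, hrhs, inv_eq_one_div,
    div_le_div_iff₀ (Real.exp_pos _) (by positivity)]
  linarith [h5]

lemma integrable_exp_neg_mul_norm' {c : ℝ} (hc : 0 < c) :
    Integrable (fun t : EuclideanSpace ℝ (Fin 2) => Real.exp (-(c * ‖t‖))) := by
  have hint : Integrable (fun t : EuclideanSpace ℝ (Fin 2) =>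
      (27 * Real.exp c / c ^ 3) * (1 + ‖t‖) ^ (-3 : ℝ)) := by
    apply Integrable.const_mul
    apply integrable_one_add_norm (E := EuclideanSpace ℝ (Fin 2)) (r := 3)
    simp [finrank_euclideanSpace_fin]; norm_num
  refine hint.mono' ?_ ?_
  · exact (Real.continuous_exp.comp (continuous_const.mul continuous_norm).neg).aestronglyMeasurable
  · filter_upwards with t
    rw [Real.norm_of_nonneg (Real.exp_pos _).le]
    exact exp_neg_le_aux hc ‖t‖ (norm_nonneg t)

lemma exists_unit_dualCone (Γ : Set (EuclideanSpace ℝ (Fin 2)))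
    (hopen : IsOpen Γ) (hne : Γ.Nonempty)
    (hcone : ∀ x ∈ Γ, ∀ y ∈ Γ, ∀ a b : ℝ, 0 < a → 0 < b → a • x + b • y ∈ Γ)
    (β : EuclideanSpace ℝ (Fin 2)) (hβ : β ∈ frontier Γ) :
    ∃ t₁ : EuclideanSpace ℝ (Fin 2), ‖t₁‖ = 1 ∧ t₁ ∈ dualCone Γ ∧ (inner ℝ β t₁ : ℝ) = 0 := by
  have hβc : β ∈ closure Γ := hβ.1
  have hβn : β ∉ Γ := by
    intro h
    exact hβ.2 (by rwa [hopen.interior_eq])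
  have hconv : Convex ℝ Γ := by
    intro x hx y hy a b ha hb hab
    rcases ha.eq_or_lt with rfl | ha'
    · rw [zero_smul, zero_add]
      have : b = 1 := by linarith
      rw [this, one_smul]; exact hy
    rcases hb.eq_or_lt with rfl | hb'
    · rw [zero_smul, add_zero]
      have : a = 1 := by linarith
      rw [this, one_smul]; exact hx
    exact hcone x hx y hy a b ha' hb'
  have hsmul : ∀ x ∈ Γ, ∀ s : ℝ, 0 < s → s • x ∈ Γ := by
    intro x hx s hs
    have := hcone x hx x hx (s/2) (s/2) (by linarith) (by linarith)
    rwa [← add_smul, add_halves] at this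
  obtain ⟨f, hf⟩ := geometric_hahn_banach_open_point hconv hopen hβn
  obtain ⟨x₀, hx₀⟩ := hne
  have hfneg : ∀ x ∈ Γ, f x ≤ 0 := by
    intro x hx
    by_contra h
    push_neg at h
    set s : ℝ := (max (f β) 0 + 1) / f x with hs
    have hspos : 0 < s := by positivity
    have h1 : f (s • x) < f β := hf _ (hsmul x hx s hspos)
    rw [f.map_smul, smul_eq_mul, hs, div_mul_cancel₀ _ h.ne'] at h1
    have := le_max_left (f β) 0
    linarith
  have hfβle : f β ≤ 0 := by
    have hcl : closure Γ ⊆ {x | f x ≤ 0} :=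
      closure_minimal hfneg (isClosed_le f.continuous continuous_const)
    exact hcl hβc
  have hfβge : 0 ≤ f β := by
    by_contra h
    push_neg at h
    have hx₀neg : f x₀ < 0 := lt_trans (hf x₀ hx₀) h
    set s : ℝ := f β / (2 * f x₀) with hs
    have hspos : 0 < s := div_pos_of_neg_of_neg h (by linarith)
    have h1 : f (s • x₀) < f β := hf _ (hsmul x₀ hx₀ s hspos)
    rw [f.map_smul, smul_eq_mul, hs] at h1
    have h2 : f β / (2 * f x₀) * f x₀ = f β / 2 := by
      rw [div_mul_eq_mul_div, mul_comm 2 (f x₀), ← div_div, mul_div_assoc,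
        div_self hx₀neg.ne, mul_one]
    rw [h2] at h1
    linarith
  have hfβ : f β = 0 := le_antisymm hfβle hfβge
  set v := (InnerProductSpace.toDual ℝ (EuclideanSpace ℝ (Fin 2))).symm f with hv
  have hvx : ∀ x, (inner ℝ v x : ℝ) = f x := fun x =>
    InnerProductSpace.toDual_symm_apply
  set t₀ : EuclideanSpace ℝ (Fin 2) := -v with ht₀
  have hinner : ∀ x, (inner ℝ x t₀ : ℝ) = -f x := by
    intro x
    rw [ht₀, inner_neg_right, real_inner_comm, hvx]
  have ht₀pos : 0 < (inner ℝ x₀ t₀ : ℝ) := by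
    rw [hinner]
    have := hf x₀ hx₀
    linarith [hfβ ▸ this]
  have ht₀dual : t₀ ∈ dualCone Γ := by
    rw [mem_dualCone_iff]
    intro x hx
    rw [hinner]
    have := hf x hx
    rw [hfβ] at this
    linarith
  have ht₀ne : t₀ ≠ 0 := by
    intro h
    rw [h, inner_zero_right] at ht₀pos
    exact lt_irrefl 0 ht₀pos
  have hnorm : (0:ℝ) < ‖t₀‖ := norm_pos_iff.mpr ht₀ne
  refine ⟨‖t₀‖⁻¹ • t₀, ?_, ?_, ?_⟩
  · rw [norm_smul, norm_inv, norm_norm, inv_mul_cancel₀ hnorm.ne']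
  · exact smul_mem_dualCone (by positivity) ht₀dual
  · rw [real_inner_smul_right, hinner, hfβ]
    ring

set_option maxHeartbeats 1000000 in
/-- For a regular cone `Γ` in `ℝ²` and a boundary point `β ∈ ∂Γ`, the diagonal of the
Cauchy–Szegő kernel `K(z, conj z) = ∫_{Γ*} e^{−4π y·t} dt` tends to `∞` as `y → β`, `y ∈ Γ`. -/
theorem szego_diagonal_blows_up_at_boundary
    (Γ : Set (EuclideanSpace ℝ (Fin 2)))
    (hopen : IsOpen Γ) (hne : Γ.Nonempty) (h0 : (0 : EuclideanSpace ℝ (Fin 2)) ∉ Γ)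
    (hcone : ∀ x ∈ Γ, ∀ y ∈ Γ, ∀ a b : ℝ, 0 < a → 0 < b → a • x + b • y ∈ Γ)
    (hreg : (interior (dualCone Γ)).Nonempty)
    (β : EuclideanSpace ℝ (Fin 2)) (hβ : β ∈ frontier Γ) :
    ∀ M : ℝ, 0 < M → ∃ δ > (0 : ℝ), ∀ y ∈ Γ, ‖y - β‖ < δ →
      M ≤ ∫ t in dualCone Γ, Real.exp (-(4 * Real.pi * ∑ j, y j * t j)) := by
  intro M hM
  obtain ⟨t₁, ht₁norm, ht₁dual, ht₁β⟩ := exists_unit_dualCone Γ hopen hne hcone β hβ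
  obtain ⟨u, hu⟩ := hreg
  obtain ⟨ε, hε, hball⟩ := Metric.isOpen_iff.mp isOpen_interior u hu
  have hball' : ball u ε ⊆ dualCone Γ := hball.trans interior_subset
  set V : ℝ := (volume (ball (0 : EuclideanSpace ℝ (Fin 2)) ε)).toReal with hV
  have hVpos : 0 < V := by
    rw [hV]
    exact ENNReal.toReal_pos (measure_ball_pos _ _ hε).ne' measure_ball_lt_top.ne
  have hπ : (0:ℝ) < Real.pi := Real.pi_pos
  set C : ℝ := Real.exp (-(4 * Real.pi * ((‖β‖ + 1) * (‖u‖ + ε)) + 1)) with hC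
  have hCpos : 0 < C := Real.exp_pos _
  obtain ⟨N, hN⟩ := exists_nat_ge (M / (C * V))
  set δ : ℝ := min 1 (1 / (8 * Real.pi * ε * N + 1)) with hδ
  have hδpos : 0 < δ := lt_min one_pos (by positivity)
  refine ⟨δ, hδpos, ?_⟩
  intro y hy hyβ
  have hδ1 : δ ≤ 1 := min_le_left _ _
  have hδ2 : δ ≤ 1 / (8 * Real.pi * ε * N + 1) := min_le_right _ _
  -- basic estimates on y
  have hyt₁ : (inner ℝ y t₁ : ℝ) ≤ δ := by
    have h1 : (inner ℝ (y - β) t₁ : ℝ) = (inner ℝ y t₁ : ℝ) := by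
      rw [inner_sub_left, ht₁β, sub_zero]
    have h2 : (inner ℝ (y - β) t₁ : ℝ) ≤ ‖y - β‖ * ‖t₁‖ := real_inner_le_norm _ _
    rw [ht₁norm, mul_one] at h2
    linarith [h1 ▸ h2, hyβ.le]
  have hynorm : ‖y‖ ≤ ‖β‖ + 1 := by
    have := norm_sub_norm_le y β
    linarith [hyβ.le]
  -- the centers and the union of balls
  set c : ℕ → EuclideanSpace ℝ (Fin 2) := fun k => u + (2 * ε * k) • t₁ with hc
  set U : Set (EuclideanSpace ℝ (Fin 2)) := ⋃ k ∈ Finset.range N, ball (c k) ε with hU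
  have hUsub : U ⊆ dualCone Γ := by
    intro t ht
    rw [hU, Set.mem_iUnion₂] at ht
    obtain ⟨k, hk, ht⟩ := ht
    have hdecomp : t = (2 * ε * k) • t₁ + (u + (t - c k)) := by
      rw [hc]; module
    rw [hdecomp]
    refine add_mem_dualCone (smul_mem_dualCone (by positivity) ht₁dual) (hball' ?_)
    rw [mem_ball, dist_eq_norm]
    simpa [dist_eq_norm] using ht
  have hmeasU : MeasurableSet U :=
    Finset.measurableSet_biUnion _ (fun k _ => measurableSet_ball)
  have hdisj : (↑(Finset.range N) : Set ℕ).PairwiseDisjoint (fun k => ball (c k) ε) := by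
    intro k _ j _ hkj
    apply ball_disjoint_ball
    rw [dist_eq_norm, hc]
    have : (u + (2 * ε * k) • t₁) - (u + (2 * ε * j) • t₁) = (2 * ε * k - 2 * ε * j) • t₁ := by
      module
    rw [this, norm_smul, ht₁norm, mul_one, Real.norm_eq_abs]
    have hint : (1:ℝ) ≤ |(k:ℝ) - (j:ℝ)| := by
      have h1 : ((k:ℤ) - (j:ℤ)) ≠ 0 := by
        intro h
        apply hkj
        have := sub_eq_zero.mp h
        exact_mod_cast this
      have h2 : (1:ℤ) ≤ |(k:ℤ) - (j:ℤ)| := Int.one_le_abs h1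
      calc (1:ℝ) ≤ |((k:ℤ) - (j:ℤ) : ℤ)| := by exact_mod_cast h2
        _ = |(k:ℝ) - (j:ℝ)| := by push_cast; ring_nf
    have : |2 * ε * (k:ℝ) - 2 * ε * (j:ℝ)| = 2 * ε * |(k:ℝ) - (j:ℝ)| := by
      rw [← mul_sub, abs_mul, abs_of_pos (by positivity : (0:ℝ) < 2 * ε)]
    rw [this]
    nlinarith
  have hvolU : volume U = (N : ENNReal) * volume (ball (0 : EuclideanSpace ℝ (Fin 2)) ε) := by
    rw [hU, measure_biUnion_finset hdisj (fun k _ => measurableSet_ball)]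
    have : ∀ k ∈ Finset.range N, volume (ball (c k) ε)
        = volume (ball (0 : EuclideanSpace ℝ (Fin 2)) ε) := fun k _ =>
      Measure.addHaar_ball_center volume (c k) ε
    rw [Finset.sum_congr rfl this, Finset.sum_const, Finset.card_range, nsmul_eq_mul]
  have hvolfin : volume U ≠ ⊤ := by
    rw [hvolU]
    exact ENNReal.mul_ne_top (ENNReal.natCast_ne_top N) measure_ball_lt_top.ne
  have hvolR : (volume U).toReal = N * V := by
    rw [hvolU, ENNReal.toReal_mul, hV]
    simp
  -- lower bound for the integrand on U
  have hbound : ∀ t ∈ U, C ≤ Real.exp (-(4 * Real.pi * (inner ℝ y t : ℝ))) := by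
    intro t ht
    rw [hU, Set.mem_iUnion₂] at ht
    obtain ⟨k, hk, ht⟩ := ht
    rw [Finset.mem_range] at hk
    have hkN : (k:ℝ) ≤ N := by exact_mod_cast hk.le
    have hdecomp : (inner ℝ y t : ℝ)
        = (2 * ε * k) * (inner ℝ y t₁ : ℝ) + (inner ℝ y (u + (t - c k)) : ℝ) := by
      have : t = (2 * ε * k) • t₁ + (u + (t - c k)) := by rw [hc]; module
      conv_lhs => rw [this]
      rw [inner_add_right, real_inner_smul_right]
    have hnormut : ‖u + (t - c k)‖ ≤ ‖u‖ + ε := by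
      have h1 : ‖t - c k‖ < ε := by simpa [dist_eq_norm] using ht
      calc ‖u + (t - c k)‖ ≤ ‖u‖ + ‖t - c k‖ := norm_add_le _ _
        _ ≤ ‖u‖ + ε := by linarith
    have h2 : (inner ℝ y (u + (t - c k)) : ℝ) ≤ (‖β‖ + 1) * (‖u‖ + ε) := by
      calc (inner ℝ y (u + (t - c k)) : ℝ) ≤ ‖y‖ * ‖u + (t - c k)‖ := real_inner_le_norm _ _
        _ ≤ (‖β‖ + 1) * (‖u‖ + ε) := by
          apply mul_le_mul hynorm hnormut (norm_nonneg _) (by positivity)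
    have h3 : (2 * ε * k) * (inner ℝ y t₁ : ℝ) ≤ 2 * ε * N * δ := by
      have hknn : (0:ℝ) ≤ 2 * ε * k := by positivity
      calc (2 * ε * k) * (inner ℝ y t₁ : ℝ) ≤ (2 * ε * k) * δ :=
            mul_le_mul_of_nonneg_left hyt₁ hknn
        _ ≤ 2 * ε * N * δ := by
            apply mul_le_mul_of_nonneg_right _ hδpos.le
            exact mul_le_mul_of_nonneg_left hkN (by positivity)
    have h4 : 4 * Real.pi * (2 * ε * N * δ) ≤ 1 := by
      have hd : (0:ℝ) < 8 * Real.pi * ε * N + 1 := by positivity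
      have h5 : δ * (8 * Real.pi * ε * N + 1) ≤ 1 := by
        rw [← le_div_iff₀ hd]
        simpa [one_div] using hδ2
      have hexpand : δ * (8 * Real.pi * ε * N + 1) = δ * (8 * Real.pi * ε * N) + δ := by
        ring
      rw [hexpand] at h5
      have heq : 4 * Real.pi * (2 * ε * N * δ) = δ * (8 * Real.pi * ε * N) := by ring
      rw [heq]
      linarith [hδpos]
    rw [hC]
    apply Real.exp_le_exp.mpr
    rw [neg_le_neg_iff]
    have hsum : (inner ℝ y t : ℝ) ≤ 2 * ε * N * δ + (‖β‖ + 1) * (‖u‖ + ε) := by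
      rw [hdecomp]; linarith
    have hmul := mul_le_mul_of_nonneg_left hsum (by positivity : (0:ℝ) ≤ 4 * Real.pi)
    rw [mul_add] at hmul
    linarith [hmul, h4]
  -- integrability on the dual cone
  have hint : IntegrableOn
      (fun t => Real.exp (-(4 * Real.pi * (inner ℝ y t : ℝ)))) (dualCone Γ) volume := by
    obtain ⟨r, hr, hbr⟩ := Metric.isOpen_iff.mp hopen y hy
    have hlow : ∀ t ∈ dualCone Γ, (r / 2) * ‖t‖ ≤ (inner ℝ y t : ℝ) := by
      intro t ht
      rcases eq_or_ne t 0 with rfl | htne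
      · simp
      have hnt : (0:ℝ) < ‖t‖ := norm_pos_iff.mpr htne
      set x : EuclideanSpace ℝ (Fin 2) := y - ((r / 2) * ‖t‖⁻¹) • t with hx
      have hxball : x ∈ ball y r := by
        rw [mem_ball, dist_eq_norm, hx]
        have : y - ((r / 2) * ‖t‖⁻¹) • t - y = -(((r / 2) * ‖t‖⁻¹) • t) := by abel
        rw [this, norm_neg, norm_smul, Real.norm_eq_abs,
          abs_of_pos (by positivity), mul_assoc, inv_mul_cancel₀ hnt.ne', mul_one]
        linarith
      have hxineq := (mem_dualCone_iff Γ t).mp ht x (hbr hxball)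
      rw [hx, inner_sub_left, real_inner_smul_left, real_inner_self_eq_norm_sq] at hxineq
      have : (r / 2) * ‖t‖⁻¹ * ‖t‖ ^ 2 = (r / 2) * ‖t‖ := by
        field_simp
      rw [this] at hxineq
      linarith
    have hmaj := integrable_exp_neg_mul_norm' (c := 4 * Real.pi * (r / 2)) (by positivity)
    refine (hmaj.integrableOn).mono' ?_ ?_
    · exact (Real.continuous_exp.comp
        ((continuous_const.mul (continuous_const.inner continuous_id)).neg)).aestronglyMeasurable
    · filter_upwards [ae_restrict_mem (isClosed_dualCone Γ).measurableSet] with t ht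
      rw [Real.norm_of_nonneg (Real.exp_pos _).le]
      apply Real.exp_le_exp.mpr
      rw [neg_le_neg_iff]
      have := hlow t ht
      nlinarith
  -- conclusion
  have hgoal : ∀ t : EuclideanSpace ℝ (Fin 2),
      Real.exp (-(4 * Real.pi * ∑ j, y j * t j))
        = Real.exp (-(4 * Real.pi * (inner ℝ y t : ℝ))) := by
    intro t; rw [sum_mul_eq_inner]
  simp only [hgoal]
  calc M ≤ N * (C * V) := by
        rw [div_le_iff₀ (by positivity)] at hN
        linarith [hN]
    _ = C * ((volume U).toReal) := by rw [hvolR]; ring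
    _ ≤ ∫ t in U, Real.exp (-(4 * Real.pi * (inner ℝ y t : ℝ))) :=
        by have := setIntegral_ge_of_const_le hmeasU hvolfin hbound (hint.mono_set hUsub)
           rw [Measure.real, smul_eq_mul, mul_comm] at this; exact this
    _ ≤ ∫ t in dualCone Γ, Real.exp (-(4 * Real.pi * (inner ℝ y t : ℝ))) :=
        setIntegral_mono_set hint
          (Filter.Eventually.of_forall fun t => (Real.exp_pos _).le)
          (HasSubset.Subset.eventuallyLE hUsub)
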